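/- If all bases of a nonempty hereditary family H have a common element x, then the star H⟨x⟩ = {A ∈ H : x ∈ A} satisfies |H⟨x⟩| = |H|/2. -/

import Mathlib

open Finset

theorem star_half_of_bases_common {α : Type*} [DecidableEq α]
    (H : Finset (Finset α)) (x : α)
    (hne : H.Nonempty)
    (hH : ∀ A ∈ H, ∀ B ⊆ A, B ∈ H)
    (hx : ∀ B ∈ H, (∀ C ∈ H, B ⊆ C → B = C) → x ∈ B) :
    2 * (H.filter (fun A => x ∈ A)).card = H.card := by
  have hins : ∀ A ∈ H, insert x A ∈ H := by
    intro A hA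
    have hSne : (H.filter (fun B => A ⊆ B)).Nonempty :=
      ⟨A, mem_filter.2 ⟨hA, Finset.Subset.refl A⟩⟩
    obtain ⟨B, hB, hBmax⟩ := Finset.exists_max_image _ Finset.card hSne
    rw [mem_filter] at hB
    have hxB : x ∈ B := by
      refine hx B hB.1 ?_
      intro C hC hBC
      exact Finset.eq_of_subset_of_card_le hBC
        (hBmax C (mem_filter.2 ⟨hC, hB.2.trans hBC⟩))
    exact hH B hB.1 _ (Finset.insert_subset hxB hB.2)
  have hcard : (H.filter (fun A => ¬ x ∈ A)).card
      = (H.filter (fun A => x ∈ A)).card := by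
    apply Finset.card_bij' (fun A _ => insert x A) (fun B _ => B.erase x)
    · intro A hA
      rw [mem_filter] at hA
      exact Finset.erase_insert hA.2
    · intro B hB
      rw [mem_filter] at hB
      exact Finset.insert_erase hB.2
    · intro A hA
      rw [mem_filter] at hA ⊢
      exact ⟨hins A hA.1, mem_insert_self x A⟩
    · intro B hB
      rw [mem_filter] at hB ⊢
      exact ⟨hH B hB.1 _ (erase_subset x B), notMem_erase x B⟩
  have := Finset.card_filter_add_card_filter_not
    (s := H) (p := fun A => x ∈ A)
  omega
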